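/- Let G₃ and G₄ be the cubic matrices of order 2 over ℂ with entries (G₃)_{121} = −i, (G₃)_{211} = −i/2 and all other entries 0, and (G₄)_{121} = −1, (G₄)_{211} = 1/2 and all other entries 0. Then, with respect to the ternary ω-commutator [s,u,v] = s·u·v + ω·u·v·s + ω̄·v·s·u + v·u·s + ω̄·u·s·v + ω·s·v·u built from the cubic-matrix product (A·B·C)_{ijk} = Σ_{p,r,s} A_{ijp} B_{rsp} C_{srk}, one has [G₃,G₄,G₃] = G₄ and [G₄,G₃,G₄] = G₃; hence the span of G₃ and G₄ is a two-dimensional subalgebra of the ternary ω-Lie algebra of cubic matrices of order 2, isomorphic to the type II algebra in the classification of two-dimensional ternary ω-Lie algebras. -/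

import Mathlib

/-- The primitive cube root of unity ω = exp(2πi/3). -/
noncomputable def ω : ℂ := Complex.exp (2 * Real.pi * Complex.I / 3)

/-- The ternary multiplication of cubic matrices:
`(A·B·C)_{ijk} = Σ_{p,q,s} A_{ijp} B_{qsp} C_{sqk}`. -/
noncomputable def cubicTernary {r : ℕ} (A B C : Fin r → Fin r → Fin r → ℂ) :
    Fin r → Fin r → Fin r → ℂ :=
  fun i j k => ∑ p, ∑ q, ∑ s, A i j p * B q s p * C s q k

/-- The ternary ω-commutator of a ternary multiplication `m`. -/
noncomputable def tbr {V : Type*} [AddCommGroup V] [Module ℂ V]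
    (m : V → V → V → V) (s u v : V) : V :=
  m s u v + ω • m u v s + (ω ^ 2) • m v s u + m v u s + (ω ^ 2) • m u s v + ω • m s v u

/-- The cubic matrix `G₃` of order 2, with `(G₃)₁₂₁ = −i`, `(G₃)₂₁₁ = −i/2` and all other
entries `0` (indices shifted to `0,1`). -/
noncomputable def G₃ : Fin 2 → Fin 2 → Fin 2 → ℂ :=
  ![![![0, 0], ![-Complex.I, 0]], ![![-Complex.I / 2, 0], ![0, 0]]]

/-- The cubic matrix `G₄` of order 2, with `(G₄)₁₂₁ = −1`, `(G₄)₂₁₁ = 1/2` and all other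
entries `0` (indices shifted to `0,1`). -/
noncomputable def G₄ : Fin 2 → Fin 2 → Fin 2 → ℂ :=
  ![![![0, 0], ![-1, 0]], ![![1 / 2, 0], ![0, 0]]]



section lin
variable {r : ℕ} (a a' b b' c c' : Fin r → Fin r → Fin r → ℂ) (x : ℂ)

lemma ct_add1 : cubicTernary (a + a') b c = cubicTernary a b c + cubicTernary a' b c := by
  funext i j k
  simp [cubicTernary, add_mul, Finset.sum_add_distrib]
lemma ct_add2 : cubicTernary a (b + b') c = cubicTernary a b c + cubicTernary a b' c := by
  funext i j k
  simp [cubicTernary, add_mul, mul_add, Finset.sum_add_distrib]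
lemma ct_add3 : cubicTernary a b (c + c') = cubicTernary a b c + cubicTernary a b c' := by
  funext i j k
  simp [cubicTernary, mul_add, Finset.sum_add_distrib]
lemma ct_smul1 : cubicTernary (x • a) b c = x • cubicTernary a b c := by
  funext i j k
  simp [cubicTernary, Finset.mul_sum, mul_assoc]
lemma ct_smul2 : cubicTernary a (x • b) c = x • cubicTernary a b c := by
  funext i j k
  simp [cubicTernary, Finset.mul_sum]
  congr 1; ext p; congr 1; ext q; congr 1; ext s; ring
lemma ct_smul3 : cubicTernary a b (x • c) = x • cubicTernary a b c := by
  funext i j k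
  simp [cubicTernary, Finset.mul_sum]
  congr 1; ext p; congr 1; ext q; congr 1; ext s; ring
end lin
section tbrlin
variable {r : ℕ} (a a' b b' c c' : Fin r → Fin r → Fin r → ℂ) (x : ℂ)

lemma tbr_add1 : tbr cubicTernary (a + a') b c = tbr cubicTernary a b c + tbr cubicTernary a' b c := by
  simp only [tbr, ct_add1, ct_add2, ct_add3, smul_add]
  abel
lemma tbr_add2 : tbr cubicTernary a (b + b') c = tbr cubicTernary a b c + tbr cubicTernary a b' c := by
  simp only [tbr, ct_add1, ct_add2, ct_add3, smul_add]
  abel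
lemma tbr_add3 : tbr cubicTernary a b (c + c') = tbr cubicTernary a b c + tbr cubicTernary a b c' := by
  simp only [tbr, ct_add1, ct_add2, ct_add3, smul_add]
  abel
lemma tbr_smul1 : tbr cubicTernary (x • a) b c = x • tbr cubicTernary a b c := by
  simp only [tbr, ct_smul1, ct_smul2, ct_smul3, smul_add, smul_comm x]
lemma tbr_smul2 : tbr cubicTernary a (x • b) c = x • tbr cubicTernary a b c := by
  simp only [tbr, ct_smul1, ct_smul2, ct_smul3, smul_add, smul_comm x]
lemma tbr_smul3 : tbr cubicTernary a b (x • c) = x • tbr cubicTernary a b c := by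
  simp only [tbr, ct_smul1, ct_smul2, ct_smul3, smul_add, smul_comm x]
end tbrlin
lemma homega : ω ^ 2 + ω + 1 = 0 := by
  have hp : IsPrimitiveRoot ω 3 := by
    have := Complex.isPrimitiveRoot_exp 3 (by norm_num)
    convert this using 2
    simp only [ω, Nat.cast_ofNat]
  have h3 : ω ^ 3 = 1 := hp.pow_eq_one
  have h1 : ω ≠ 1 := hp.ne_one (by norm_num)
  have h : (ω - 1) * (ω ^ 2 + ω + 1) = 0 := by linear_combination h3
  rcases mul_eq_zero.1 h with h | h
  · exact absurd (sub_eq_zero.1 h) h1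
  · exact h

lemma br333 : tbr cubicTernary G₃ G₃ G₃ = (0 : Fin 2 → Fin 2 → Fin 2 → ℂ) := by
  funext i j k
  fin_cases i <;> fin_cases j <;> fin_cases k <;>
    simp [tbr, cubicTernary, G₃, G₄, Fin.sum_univ_two]
  · linear_combination ((2 : ℂ) * Complex.I) * homega + ((-1 : ℂ) * Complex.I * (1 + ω + ω^2)) * Complex.I_sq
  · linear_combination ((1 : ℂ) * Complex.I) * homega + ((-1 : ℂ) * Complex.I * (1 + ω + ω^2)) * Complex.I_sq

lemma br334 : tbr cubicTernary G₃ G₃ G₄ = ω • G₄ := by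
  funext i j k
  fin_cases i <;> fin_cases j <;> fin_cases k <;>
    simp [tbr, cubicTernary, G₃, G₄, Fin.sum_univ_two]
  · linear_combination ((1 : ℂ)) * homega + ((-3/2 : ℂ) * (1 + ω^2)) * Complex.I_sq
  · linear_combination ((-1/2 : ℂ)) * homega + ((1/2 : ℂ) * (1 + ω^2)) * Complex.I_sq

lemma br343 : tbr cubicTernary G₃ G₄ G₃ = G₄ := by
  funext i j k
  fin_cases i <;> fin_cases j <;> fin_cases k <;>
    simp [tbr, cubicTernary, G₃, G₄, Fin.sum_univ_two]
  · linear_combination ((1 : ℂ)) * homega + ((-3/2 : ℂ) * (ω + ω^2)) * Complex.I_sq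
  · linear_combination ((-1/2 : ℂ)) * homega + ((1/2 : ℂ) * (ω + ω^2)) * Complex.I_sq

lemma br344 : tbr cubicTernary G₃ G₄ G₄ = (ω^2) • G₃ := by
  funext i j k
  fin_cases i <;> fin_cases j <;> fin_cases k <;>
    simp [tbr, cubicTernary, G₃, G₄, Fin.sum_univ_two]
  · linear_combination ((1 : ℂ) * Complex.I) * homega + ((0 : ℂ)) * Complex.I_sq
  · linear_combination ((1/2 : ℂ) * Complex.I) * homega + ((0 : ℂ)) * Complex.I_sq

lemma br433 : tbr cubicTernary G₄ G₃ G₃ = (ω^2) • G₄ := by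
  funext i j k
  fin_cases i <;> fin_cases j <;> fin_cases k <;>
    simp [tbr, cubicTernary, G₃, G₄, Fin.sum_univ_two]
  · linear_combination ((1 : ℂ)) * homega + ((-3/2 : ℂ) * (1 + ω)) * Complex.I_sq
  · linear_combination ((-1/2 : ℂ)) * homega + ((1/2 : ℂ) * (1 + ω)) * Complex.I_sq

lemma br434 : tbr cubicTernary G₄ G₃ G₄ = G₃ := by
  funext i j k
  fin_cases i <;> fin_cases j <;> fin_cases k <;>
    simp [tbr, cubicTernary, G₃, G₄, Fin.sum_univ_two]
  · linear_combination ((1 : ℂ) * Complex.I) * homega + ((0 : ℂ)) * Complex.I_sq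
  · linear_combination ((1/2 : ℂ) * Complex.I) * homega + ((0 : ℂ)) * Complex.I_sq

lemma br443 : tbr cubicTernary G₄ G₄ G₃ = ω • G₃ := by
  funext i j k
  fin_cases i <;> fin_cases j <;> fin_cases k <;>
    simp [tbr, cubicTernary, G₃, G₄, Fin.sum_univ_two]
  · linear_combination ((1 : ℂ) * Complex.I) * homega + ((0 : ℂ)) * Complex.I_sq
  · linear_combination ((1/2 : ℂ) * Complex.I) * homega + ((0 : ℂ)) * Complex.I_sq

lemma br444 : tbr cubicTernary G₄ G₄ G₄ = (0 : Fin 2 → Fin 2 → Fin 2 → ℂ) := by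
  funext i j k
  fin_cases i <;> fin_cases j <;> fin_cases k <;>
    simp [tbr, cubicTernary, G₃, G₄, Fin.sum_univ_two]
  · linear_combination ((2 : ℂ)) * homega + ((0 : ℂ)) * Complex.I_sq
  · linear_combination ((-1 : ℂ)) * homega + ((0 : ℂ)) * Complex.I_sq

/-- With respect to the ternary ω-commutator of the cubic-matrix product one has
`[G₃,G₄,G₃] = G₄` and `[G₄,G₃,G₄] = G₃`; hence the span of `G₃, G₄` is a two-dimensional
subalgebra of the ternary ω-Lie algebra of cubic matrices of order 2, isomorphic to the
type II algebra of the classification of two-dimensional ternary ω-Lie algebras. -/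
theorem G₃G₄_typeII_subalgebra :
    tbr cubicTernary G₃ G₄ G₃ = G₄ ∧ tbr cubicTernary G₄ G₃ G₄ = G₃
      ∧ ∀ a b c : Fin 2 → Fin 2 → Fin 2 → ℂ,
          a ∈ Submodule.span ℂ {G₃, G₄} → b ∈ Submodule.span ℂ {G₃, G₄} →
          c ∈ Submodule.span ℂ {G₃, G₄} →
          tbr cubicTernary a b c ∈ Submodule.span ℂ {G₃, G₄} := by
  refine ⟨br343, br434, ?_⟩
  have hG3 : G₃ ∈ Submodule.span ℂ ({G₃, G₄} : Set (Fin 2 → Fin 2 → Fin 2 → ℂ)) :=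
    Submodule.subset_span (by simp)
  have hG4 : G₄ ∈ Submodule.span ℂ ({G₃, G₄} : Set (Fin 2 → Fin 2 → Fin 2 → ℂ)) :=
    Submodule.subset_span (by simp)
  have base : ∀ x ∈ ({G₃, G₄} : Set (Fin 2 → Fin 2 → Fin 2 → ℂ)),
      ∀ y ∈ ({G₃, G₄} : Set (Fin 2 → Fin 2 → Fin 2 → ℂ)),
      ∀ z ∈ ({G₃, G₄} : Set (Fin 2 → Fin 2 → Fin 2 → ℂ)),
      tbr cubicTernary x y z ∈ Submodule.span ℂ ({G₃, G₄} : Set (Fin 2 → Fin 2 → Fin 2 → ℂ)) := by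
    rintro x (rfl | rfl) y (rfl | rfl) z (rfl | rfl)
    · rw [br333]; exact Submodule.zero_mem _
    · rw [br334]; exact Submodule.smul_mem _ _ hG4
    · rw [br343]; exact hG4
    · rw [br344]; exact Submodule.smul_mem _ _ hG3
    · rw [br433]; exact Submodule.smul_mem _ _ hG4
    · rw [br434]; exact hG3
    · rw [br443]; exact Submodule.smul_mem _ _ hG3
    · rw [br444]; exact Submodule.zero_mem _
  -- zero cases
  have z1 : ∀ b c : Fin 2 → Fin 2 → Fin 2 → ℂ, tbr cubicTernary 0 b c = 0 := by
    intro b c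
    have := tbr_smul1 (0 : Fin 2 → Fin 2 → Fin 2 → ℂ) b c (0 : ℂ)
    simpa using this
  have z2 : ∀ a c : Fin 2 → Fin 2 → Fin 2 → ℂ, tbr cubicTernary a 0 c = 0 := by
    intro a c
    have := tbr_smul2 a (0 : Fin 2 → Fin 2 → Fin 2 → ℂ) c (0 : ℂ)
    simpa using this
  have z3 : ∀ a b : Fin 2 → Fin 2 → Fin 2 → ℂ, tbr cubicTernary a b 0 = 0 := by
    intro a b
    have := tbr_smul3 a b (0 : Fin 2 → Fin 2 → Fin 2 → ℂ) (0 : ℂ)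
    simpa using this
  intro a b c ha hb hc
  induction ha using Submodule.span_induction with
  | mem x hx =>
    induction hb using Submodule.span_induction with
    | mem y hy =>
      induction hc using Submodule.span_induction with
      | mem z hz => exact base x hx y hy z hz
      | zero => rw [z3]; exact Submodule.zero_mem _
      | add u v _ _ hu hv => rw [tbr_add3]; exact Submodule.add_mem _ hu hv
      | smul t u _ hu => rw [tbr_smul3]; exact Submodule.smul_mem _ _ hu
    | zero => rw [z2]; exact Submodule.zero_mem _
    | add u v _ _ hu hv => rw [tbr_add2]; exact Submodule.add_mem _ hu hv
    | smul t u _ hu => rw [tbr_smul2]; exact Submodule.smul_mem _ _ hu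
  | zero => rw [z1]; exact Submodule.zero_mem _
  | add u v _ _ hu hv => rw [tbr_add1]; exact Submodule.add_mem _ hu hv
  | smul t u _ hu => rw [tbr_smul1]; exact Submodule.smul_mem _ _ hu
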